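/- Let c be a nonzero complex number and let A = ℂ⟨u,v⟩/(u² − c·v²). Then the images in A of the monomials u^i (v·u)^j v^ℓ, where i and j range over all nonnegative integers and ℓ ∈ {0,1}, form a basis of A as a ℂ-vector space (they are linearly independent and span A). -/

import Mathlib

/-! Lemma 1.3 of Ferraro–Kirkman–Moore–Won: a basis for `ℂ⟨u,v⟩/(u² - c v²)`. -/

noncomputable section

open FreeAlgebra

/-- The relation `u² = c • v²` on the free algebra `ℂ⟨u,v⟩`; quotienting by it
is the same as quotienting by the two-sided ideal generated by `u² - c v²`. -/
inductive Stmt2.Rel (c : ℂ) : FreeAlgebra ℂ (Fin 2) → FreeAlgebra ℂ (Fin 2) → Prop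
  | main : Stmt2.Rel c (ι ℂ 0 * ι ℂ 0) (c • (ι ℂ 1 * ι ℂ 1))

/-- The algebra `A = ℂ⟨u,v⟩/(u² - c v²)`. -/
abbrev Stmt2.A (c : ℂ) := RingQuot (Stmt2.Rel c)

/-- The image of `u` in `A`. -/
def Stmt2.u (c : ℂ) : Stmt2.A c := RingQuot.mkAlgHom ℂ (Stmt2.Rel c) (ι ℂ 0)

/-- The image of `v` in `A`. -/
def Stmt2.v (c : ℂ) : Stmt2.A c := RingQuot.mkAlgHom ℂ (Stmt2.Rel c) (ι ℂ 1)

namespace Stmt2Aux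

abbrev Idx := ℕ × ℕ × Fin 2
abbrev M := Idx →₀ ℂ

def e (m : Idx) : M := Finsupp.single m 1

def Uend : M →ₗ[ℂ] M := Finsupp.lmapDomain ℂ ℂ (fun m => (m.1 + 1, m.2))

@[simp] lemma Uend_e (m : Idx) : Uend (e m) = e (m.1 + 1, m.2) := by
  simp [Uend, e, Finsupp.lmapDomain, Finsupp.mapDomain_single]

def Vfun (c : ℂ) : Idx → M := fun m =>
  if m.1 % 2 = 1 then e (m.1 - 1, m.2.1 + 1, m.2.2)
  else if m.2.1 = 0 then
    (if m.2.2 = 0 then e (m.1, 0, 1) else c⁻¹ • e (m.1 + 2, 0, 0))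
  else c⁻¹ • e (m.1 + 3, m.2.1 - 1, m.2.2)

def Vend (c : ℂ) : M →ₗ[ℂ] M := Finsupp.lift M ℂ Idx (Vfun c)

@[simp] lemma Vend_e (c : ℂ) (m : Idx) : Vend c (e m) = Vfun c m := by
  simp [Vend, e]

lemma Vfun_odd (c : ℂ) (i j : ℕ) (l : Fin 2) (h : i % 2 = 1) :
    Vfun c (i, j, l) = e (i - 1, j + 1, l) := by simp [Vfun, h]
lemma Vfun_j0_l0 (c : ℂ) (i : ℕ) (h : i % 2 = 0) :
    Vfun c (i, 0, 0) = e (i, 0, 1) := by simp [Vfun, h]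
lemma Vfun_j0_l1 (c : ℂ) (i : ℕ) (h : i % 2 = 0) :
    Vfun c (i, 0, 1) = c⁻¹ • e (i + 2, 0, 0) := by simp [Vfun, h]
lemma Vfun_jpos (c : ℂ) (i j : ℕ) (l : Fin 2) (h : i % 2 = 0) (hj : j ≠ 0) :
    Vfun c (i, j, l) = c⁻¹ • e (i + 3, j - 1, l) := by simp [Vfun, h, hj]

lemma Vend_e_odd (c : ℂ) (i j : ℕ) (l : Fin 2) (h : i % 2 = 1) :
    Vend c (e (i, j, l)) = e (i - 1, j + 1, l) := by rw [Vend_e, Vfun_odd c i j l h]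
lemma Vend_e_j0_l0 (c : ℂ) (i : ℕ) (h : i % 2 = 0) :
    Vend c (e (i, 0, 0)) = e (i, 0, 1) := by rw [Vend_e, Vfun_j0_l0 c i h]
lemma Vend_e_j0_l1 (c : ℂ) (i : ℕ) (h : i % 2 = 0) :
    Vend c (e (i, 0, 1)) = c⁻¹ • e (i + 2, 0, 0) := by rw [Vend_e, Vfun_j0_l1 c i h]
lemma Vend_e_jpos (c : ℂ) (i j : ℕ) (l : Fin 2) (h : i % 2 = 0) (hj : j ≠ 0) :
    Vend c (e (i, j, l)) = c⁻¹ • e (i + 3, j - 1, l) := by rw [Vend_e, Vfun_jpos c i j l h hj]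

lemma relEnd (c : ℂ) (hc : c ≠ 0) :
    (Uend * Uend : Module.End ℂ M) = c • (Vend c * Vend c) := by
  apply Finsupp.basisSingleOne.ext
  rintro ⟨i, j, l⟩
  have hb : (Finsupp.basisSingleOne (R := ℂ) (ι := Idx)) (i, j, l) = e (i, j, l) := by
    simp [e]
  rw [hb]
  simp only [Module.End.mul_apply, LinearMap.smul_apply, Uend_e]
  rcases Nat.even_or_odd' i with ⟨k, hk | hk⟩
  · subst hk
    rcases Nat.eq_zero_or_pos j with rfl | hj
    · fin_cases l
      · show e (2 * k + 1 + 1, 0, (0 : Fin 2)) = c • Vend c (Vend c (e (2 * k, 0, (0 : Fin 2))))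
        rw [Vend_e_j0_l0 c (2 * k) (by omega), Vend_e_j0_l1 c (2 * k) (by omega), smul_smul,
          mul_inv_cancel₀ hc, one_smul]
      · show e (2 * k + 1 + 1, 0, (1 : Fin 2)) = c • Vend c (Vend c (e (2 * k, 0, (1 : Fin 2))))
        rw [Vend_e_j0_l1 c (2 * k) (by omega), map_smul, Vend_e_j0_l0 c (2 * k + 2) (by omega),
          smul_smul, mul_inv_cancel₀ hc, one_smul]
    · rw [Vend_e_jpos c (2 * k) j l (by omega) hj.ne', map_smul,
        Vend_e_odd c (2 * k + 3) (j - 1) l (by omega), smul_smul,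
        mul_inv_cancel₀ hc, one_smul]
      have h3 : 2 * k + 3 - 1 = 2 * k + 1 + 1 := by omega
      have h4 : j - 1 + 1 = j := by omega
      rw [h3, h4]
  · subst hk
    rw [Vend_e_odd c (2 * k + 1) j l (by omega),
      Vend_e_jpos c (2 * k + 1 - 1) (j + 1) l (by omega) (by omega), smul_smul,
      mul_inv_cancel₀ hc, one_smul]
    have h3 : 2 * k + 1 - 1 + 3 = 2 * k + 1 + 1 + 1 := by omega
    have h4 : j + 1 - 1 = j := by omega
    rw [h3, h4]

def gen (c : ℂ) : Fin 2 → Module.End ℂ M := ![Uend, Vend c]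

def phiFree (c : ℂ) : FreeAlgebra ℂ (Fin 2) →ₐ[ℂ] Module.End ℂ M :=
  FreeAlgebra.lift ℂ (gen c)

lemma phiFree_rel (c : ℂ) (hc : c ≠ 0) : ∀ ⦃x y : FreeAlgebra ℂ (Fin 2)⦄,
    Stmt2.Rel c x y → phiFree c x = phiFree c y := by
  rintro _ _ ⟨⟩
  simp only [map_mul, map_smul, phiFree, FreeAlgebra.lift_ι_apply, gen]
  simpa using relEnd c hc

def phi (c : ℂ) (hc : c ≠ 0) : Stmt2.A c →ₐ[ℂ] Module.End ℂ M :=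
  RingQuot.liftAlgHom ℂ ⟨phiFree c, phiFree_rel c hc⟩

lemma phi_u (c : ℂ) (hc : c ≠ 0) : phi c hc (Stmt2.u c) = Uend := by
  rw [Stmt2.u, phi, RingQuot.liftAlgHom_mkAlgHom_apply]
  simp [phiFree, gen]

lemma phi_v (c : ℂ) (hc : c ≠ 0) : phi c hc (Stmt2.v c) = Vend c := by
  rw [Stmt2.v, phi, RingQuot.liftAlgHom_mkAlgHom_apply]
  simp [phiFree, gen]

lemma Upow_e (i i0 j : ℕ) (l : Fin 2) : (Uend ^ i) (e (i0, j, l)) = e (i0 + i, j, l) := by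
  induction i generalizing i0 with
  | zero => simp
  | succ n ih =>
    rw [pow_succ', Module.End.mul_apply]
    show Uend ((Uend ^ n) (e (i0, j, l))) = _
    rw [ih i0, Uend_e]
    show e (i0 + n + 1, j, l) = _
    have : i0 + n + 1 = i0 + (n + 1) := by omega
    rw [this]

lemma VUpow_e (c : ℂ) (j j0 : ℕ) (l : Fin 2) :
    ((Vend c * Uend) ^ j) (e (0, j0, l)) = e (0, j0 + j, l) := by
  induction j generalizing j0 with
  | zero => simp
  | succ n ih =>
    rw [pow_succ, Module.End.mul_apply, Module.End.mul_apply]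
    show ((Vend c * Uend) ^ n) (Vend c (Uend (e (0, j0, l)))) = _
    rw [Uend_e]
    show ((Vend c * Uend) ^ n) (Vend c (e (1, j0, l))) = _
    rw [Vend_e_odd c 1 j0 l (by omega)]
    show ((Vend c * Uend) ^ n) (e (0, j0 + 1, l)) = _
    rw [ih (j0 + 1)]
    have : j0 + 1 + n = j0 + (n + 1) := by omega
    rw [this]


section
variable (c : ℂ) (hc : c ≠ 0)

/-- The monomial family from the statement. -/
def mono (m : Idx) : Stmt2.A c :=
  Stmt2.u c ^ m.1 * (Stmt2.v c * Stmt2.u c) ^ m.2.1 * Stmt2.v c ^ (m.2.2 : ℕ)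

lemma phi_mono (m : Idx) : phi c hc (mono c m) (e (0, 0, 0)) = e m := by
  obtain ⟨i, j, l⟩ := m
  have h0 : phi c hc (mono c (i, j, l)) =
      Uend ^ i * (Vend c * Uend) ^ j * Vend c ^ (l : ℕ) := by
    simp only [mono, map_mul, map_pow, phi_u c hc, phi_v c hc]
  rw [h0]
  rw [Module.End.mul_apply, Module.End.mul_apply]
  fin_cases l
  · show (Uend ^ i) (((Vend c * Uend) ^ j) ((Vend c ^ (0 : ℕ)) (e (0, 0, 0)))) = e (i, j, 0)
    rw [pow_zero, Module.End.one_apply, VUpow_e, Upow_e]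
    norm_num
  · show (Uend ^ i) (((Vend c * Uend) ^ j) ((Vend c ^ (1 : ℕ)) (e (0, 0, 0)))) = e (i, j, 1)
    rw [pow_one, Vend_e_j0_l0 c 0 (by omega), VUpow_e, Upow_e]
    norm_num

lemma hrel : Stmt2.u c * Stmt2.u c = c • (Stmt2.v c * Stmt2.v c) := by
  have := RingQuot.mkAlgHom_rel ℂ (Stmt2.Rel.main (c := c))
  simpa only [map_mul, map_smul, Stmt2.u, Stmt2.v] using this

lemma hvv0 (hc : c ≠ 0) : Stmt2.v c * Stmt2.v c = c⁻¹ • (Stmt2.u c * Stmt2.u c) := by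
  rw [hrel c, smul_smul, inv_mul_cancel₀ hc, one_smul]

lemma hcomm0 : (Stmt2.u c * Stmt2.u c) * Stmt2.v c = Stmt2.v c * (Stmt2.u c * Stmt2.u c) := by
  rw [hrel c, smul_mul_assoc, mul_smul_comm, mul_assoc]

lemma hcomm (w : Stmt2.A c) :
    Stmt2.u c * (Stmt2.u c * (Stmt2.v c * w)) = Stmt2.v c * (Stmt2.u c * (Stmt2.u c * w)) := by
  rw [← mul_assoc, ← mul_assoc, hcomm0 c, mul_assoc, mul_assoc]

lemma hvvw (hc : c ≠ 0) (w : Stmt2.A c) :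
    Stmt2.v c * (Stmt2.v c * w) = c⁻¹ • (Stmt2.u c * (Stmt2.u c * w)) := by
  rw [← mul_assoc, hvv0 c hc, smul_mul_assoc, mul_assoc]

lemma veven (k : ℕ) (w : Stmt2.A c) :
    Stmt2.v c * (Stmt2.u c ^ (2 * k) * w) = Stmt2.u c ^ (2 * k) * (Stmt2.v c * w) := by
  induction k generalizing w with
  | zero => simp
  | succ n ih =>
    have h2 : 2 * (n + 1) = 2 * n + 1 + 1 := by ring
    rw [h2, pow_succ', pow_succ', mul_assoc, mul_assoc, ← hcomm c, ih, mul_assoc, mul_assoc]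

lemma cube (a t : Stmt2.A c) (n : ℕ) : a ^ (n + 3) * t = a ^ n * (a * (a * (a * t))) := by
  rw [pow_add, mul_assoc]
  congr 1
  rw [pow_succ', pow_succ', pow_one, mul_assoc, mul_assoc]


lemma u_mul_mono (m : Idx) : Stmt2.u c * mono c m = mono c (m.1 + 1, m.2) := by
  obtain ⟨i, j, l⟩ := m
  simp only [mono]
  rw [← mul_assoc, ← mul_assoc, ← pow_succ']

def SP : Submodule ℂ (Stmt2.A c) := Submodule.span ℂ (Set.range (mono c))

lemma mono_mem (m : Idx) : mono c m ∈ SP c := Submodule.subset_span ⟨m, rfl⟩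

lemma u_mul_mono_mem (m : Idx) : Stmt2.u c * mono c m ∈ SP c := by
  rw [u_mul_mono c m]; exact mono_mem c _

lemma v_mul_mono_even_l0 (k : ℕ) :
    Stmt2.v c * mono c (2 * k, 0, (0 : Fin 2)) = mono c (2 * k, 0, (1 : Fin 2)) := by
  simpa [mono] using veven c k 1

lemma v_mul_mono_even_l1 (hc : c ≠ 0) (k : ℕ) :
    Stmt2.v c * mono c (2 * k, 0, (1 : Fin 2)) = c⁻¹ • mono c (2 * k + 2, 0, (0 : Fin 2)) := by
  have h1 : Stmt2.v c * (Stmt2.u c ^ (2 * k) * Stmt2.v c)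
      = Stmt2.u c ^ (2 * k) * (Stmt2.v c * Stmt2.v c) := veven c k (Stmt2.v c)
  have h2 : mono c (2 * k, 0, (1 : Fin 2)) = Stmt2.u c ^ (2 * k) * Stmt2.v c := by
    simp [mono]
  have h3 : mono c (2 * k + 2, 0, (0 : Fin 2)) = Stmt2.u c ^ (2 * k + 2) := by
    simp [mono]
  rw [h2, h3, h1, hvv0 c hc, mul_smul_comm, pow_add, pow_two]

lemma v_mul_mono_even_jpos (hc : c ≠ 0) (k j' : ℕ) (l : Fin 2) :
    Stmt2.v c * mono c (2 * k, j' + 1, l) = c⁻¹ • mono c (2 * k + 3, j', l) := by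
  simp only [mono]
  conv_lhs => rw [pow_succ', mul_assoc, mul_assoc]
  rw [veven c k]
  conv_lhs => rw [mul_assoc (Stmt2.v c) (Stmt2.u c)]
  rw [hvvw c hc, mul_smul_comm, ← cube c]
  conv_rhs => rw [mul_assoc]

lemma v_mul_mono_odd (k j : ℕ) (l : Fin 2) :
    Stmt2.v c * mono c (2 * k + 1, j, l) = mono c (2 * k, j + 1, l) := by
  simp only [mono]
  conv_lhs => rw [pow_succ, mul_assoc, mul_assoc]
  rw [veven c k, ← mul_assoc (Stmt2.v c)]
  conv_rhs => rw [pow_succ', mul_assoc, mul_assoc]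

lemma v_mul_mono_mem (hc : c ≠ 0) (m : Idx) : Stmt2.v c * mono c m ∈ SP c := by
  obtain ⟨i, j, l⟩ := m
  rcases Nat.even_or_odd' i with ⟨k, hk | hk⟩
  · subst hk
    rcases j with _ | j'
    · fin_cases l
      · show Stmt2.v c * mono c (2 * k, 0, (0 : Fin 2)) ∈ SP c
        rw [v_mul_mono_even_l0 c k]; exact mono_mem c _
      · show Stmt2.v c * mono c (2 * k, 0, (1 : Fin 2)) ∈ SP c
        rw [v_mul_mono_even_l1 c hc k]
        exact Submodule.smul_mem _ _ (mono_mem c _)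
    · rw [v_mul_mono_even_jpos c hc k j' l]
      exact Submodule.smul_mem _ _ (mono_mem c _)
  · subst hk
    rw [v_mul_mono_odd c k j l]
    exact mono_mem c _

lemma mul_mem_SP (hc : c ≠ 0) (a : Stmt2.A c) (x : Stmt2.A c) (hx : x ∈ SP c) :
    a * x ∈ SP c := by
  have hu : ∀ y ∈ SP c, Stmt2.u c * y ∈ SP c := by
    intro y hy
    refine Submodule.span_induction (p := fun z _ => Stmt2.u c * z ∈ SP c) ?_ ?_ ?_ ?_ hy
    · rintro z ⟨m, rfl⟩; exact u_mul_mono_mem c m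
    · simp
    · intro z w _ _ hz hw; rw [mul_add]; exact Submodule.add_mem _ hz hw
    · intro r z _ hz; rw [mul_smul_comm]; exact Submodule.smul_mem _ _ hz
  have hv : ∀ y ∈ SP c, Stmt2.v c * y ∈ SP c := by
    intro y hy
    refine Submodule.span_induction (p := fun z _ => Stmt2.v c * z ∈ SP c) ?_ ?_ ?_ ?_ hy
    · rintro z ⟨m, rfl⟩; exact v_mul_mono_mem c hc m
    · simp
    · intro z w _ _ hz hw; rw [mul_add]; exact Submodule.add_mem _ hz hw
    · intro r z _ hz; rw [mul_smul_comm]; exact Submodule.smul_mem _ _ hz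
  have key : ∀ b : FreeAlgebra ℂ (Fin 2), ∀ y ∈ SP c,
      (RingQuot.mkAlgHom ℂ (Stmt2.Rel c)) b * y ∈ SP c := by
    intro b
    induction b using FreeAlgebra.induction with
    | grade0 r =>
      intro y hy
      rw [AlgHom.commutes, ← Algebra.smul_def]
      exact Submodule.smul_mem _ _ hy
    | grade1 x =>
      fin_cases x
      · exact fun y hy => hu y hy
      · exact fun y hy => hv y hy
    | mul a b ha hb =>
      intro y hy
      rw [map_mul, mul_assoc]
      exact ha _ (hb y hy)
    | add a b ha hb =>
      intro y hy
      rw [map_add, add_mul]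
      exact Submodule.add_mem _ (ha y hy) (hb y hy)
  obtain ⟨b, rfl⟩ := RingQuot.mkAlgHom_surjective ℂ (Stmt2.Rel c) a
  exact key b x hx

lemma SP_eq_top (hc : c ≠ 0) : SP c = ⊤ := by
  rw [eq_top_iff]
  intro a _
  have h1 : (1 : Stmt2.A c) ∈ SP c := by
    have := mono_mem c (0, 0, 0)
    simpa [mono] using this
  simpa using mul_mem_SP c hc a 1 h1

lemma indep (hc : c ≠ 0) : LinearIndependent ℂ (mono c) := by
  classical
  let L : Stmt2.A c →ₗ[ℂ] M :=
    { toFun := fun a => phi c hc a (e (0, 0, 0))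
      map_add' := by intro a b; simp
      map_smul' := by intro r a; simp }
  apply LinearIndependent.of_comp L
  have h1 : (⇑L ∘ mono c) = fun m : Idx => e m := by
    funext m
    exact phi_mono c hc m
  rw [h1]
  have h2 : (fun m : Idx => e m)
      = ⇑(Finsupp.basisSingleOne (R := ℂ) (ι := Idx)) := by
    funext m; simp [e]
  rw [h2]
  exact (Finsupp.basisSingleOne (R := ℂ) (ι := Idx)).linearIndependent


end

end Stmt2Aux

open Stmt2 in
/-- The monomials `u^i (vu)^j v^ℓ`, `i j ∈ ℕ`, `ℓ ∈ {0,1}`, form a ℂ-basis of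
`A = ℂ⟨u,v⟩/(u² - c v²)`. -/
theorem stmt_2 (c : ℂ) (hc : c ≠ 0) :
    LinearIndependent ℂ (fun m : ℕ × ℕ × Fin 2 =>
        u c ^ m.1 * (v c * u c) ^ m.2.1 * v c ^ (m.2.2 : ℕ)) ∧
    Submodule.span ℂ (Set.range (fun m : ℕ × ℕ × Fin 2 =>
        u c ^ m.1 * (v c * u c) ^ m.2.1 * v c ^ (m.2.2 : ℕ))) = ⊤ := by
  exact ⟨Stmt2Aux.indep c hc, Stmt2Aux.SP_eq_top c hc⟩

end
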